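/- Let f ∈ RF with sign ε, m even, and β ∈ 𝔽_q^×. Let N_{sq,β} = #{x ∈ 𝔽_q : f(x) is a nonzero square in 𝔽_p and Tr(βx)=0}. Then N_{sq,β} = ((p-1)/2)[p^{m-2} - ε(-1/p)^{m/2}p^{(m-2)/2}] if f*(β)=0 or f*(β) is a nonsquare, and N_{sq,β} = ((p-1)/2)[p^{m-2} + ε(-1/p)^{m/2}p^{(m-2)/2}] if f*(β) is a nonzero square. -/

import Mathlib

open Complex Finset Polynomial

noncomputable def zp (p : ℕ) : ℂ := Complex.exp (2 * Real.pi * Complex.I / p)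

noncomputable def sqrtPstar (p : ℕ) : ℂ :=
  if p % 4 = 1 then (Real.sqrt p : ℂ) else (Real.sqrt p : ℂ) * Complex.I

section aux
variable {p : ℕ} [hpf : Fact p.Prime]

lemma zp_prim : IsPrimitiveRoot (zp p) p :=
  Complex.isPrimitiveRoot_exp p hpf.out.ne_zero

noncomputable def ep (p : ℕ) (a : ZMod p) : ℂ := zp p ^ a.val

lemma zp_pow_natCast (n : ℕ) : zp p ^ n = ep p (n : ZMod p) := by
  have h1 : zp p ^ p = 1 := zp_prim.pow_eq_one
  unfold ep
  rw [ZMod.val_natCast]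
  conv_lhs => rw [← Nat.div_add_mod n p]
  rw [pow_add, pow_mul, h1, one_pow, one_mul]

lemma ep_zero : ep p 0 = 1 := by
  unfold ep; simp

lemma ep_natCast_val (a : ZMod p) : ((a.val : ℕ) : ZMod p) = a :=
  ZMod.natCast_rightInverse a

lemma ep_add (a b : ZMod p) : ep p (a + b) = ep p a * ep p b := by
  have h : ((a.val + b.val : ℕ) : ZMod p) = a + b := by
    push_cast [ep_natCast_val]; ring
  rw [← h, ← zp_pow_natCast, pow_add]; rfl

lemma ep_mul (a b : ZMod p) : ep p (a * b) = zp p ^ (a.val * b.val) := by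
  have h : ((a.val * b.val : ℕ) : ZMod p) = a * b := by
    push_cast [ep_natCast_val]; ring
  rw [← h, ← zp_pow_natCast]

lemma ep_inj {a b : ZMod p} (hab : ep p a = ep p b) : a = b := by
  have := zp_prim.pow_inj (ZMod.val_lt a) (ZMod.val_lt b) hab
  exact ZMod.val_injective p this

lemma ep_one : ep p 1 = zp p := by
  unfold ep
  rw [ZMod.val_one p, pow_one]

lemma sum_ep : ∑ a : ZMod p, ep p a = 0 := by
  have h2 : (1:ℕ) < p := hpf.out.one_lt
  have hz : zp p ≠ 1 := zp_prim.ne_one h2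
  have key : (∑ a : ZMod p, ep p a) * zp p = ∑ a : ZMod p, ep p a := by
    rw [Finset.sum_mul]
    calc ∑ a : ZMod p, ep p a * zp p = ∑ a : ZMod p, ep p (a + 1) := by
          refine Finset.sum_congr rfl fun a _ => ?_
          rw [ep_add, ep_one]
        _ = ∑ a : ZMod p, ep p a :=
          Fintype.sum_equiv (Equiv.addRight (1 : ZMod p)) _ _ (fun a => rfl)
  have h0 : (∑ a : ZMod p, ep p a) * (zp p - 1) = 0 := by
    rw [mul_sub, key, mul_one, sub_self]
  rcases mul_eq_zero.mp h0 with h | h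
  · exact h
  · exact absurd (sub_eq_zero.mp h) hz

lemma sum_ep_mul (u : ZMod p) :
    ∑ y : ZMod p, ep p (y * u) = if u = 0 then (p : ℂ) else 0 := by
  rcases eq_or_ne u 0 with rfl | hu
  · simp [ep_zero, Finset.card_univ]
  · rw [if_neg hu, ← sum_ep (p := p)]
    exact Fintype.sum_equiv (Equiv.mulRight₀ u hu) _ _ (fun y => rfl)

lemma galois_aux {ι : Type*} [Fintype ι] (c : ℕ) (hc : ¬ p ∣ c)
    (g : ι → ℕ) (A : ℤ) (r : ℕ)
    (H : ∑ x : ι, zp p ^ g x = (A : ℂ) * zp p ^ r) :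
    ∑ x : ι, zp p ^ (c * g x) = (A : ℂ) * zp p ^ (c * r) := by
  have hζ : IsPrimitiveRoot (zp p) p := zp_prim
  set P : Polynomial ℚ := (∑ x : ι, Polynomial.X ^ g x) - Polynomial.C (A:ℚ) * Polynomial.X ^ r
    with hPdef
  have hev : ∀ w : ℂ, Polynomial.aeval w P = (∑ x : ι, w ^ g x) - (A : ℂ) * w ^ r := by
    intro w
    simp [hPdef, map_sum]
  have h1 : Polynomial.aeval (zp p) P = 0 := by
    rw [hev, H]; ring
  have hdvd : minpoly ℚ (zp p) ∣ P := minpoly.dvd ℚ _ h1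
  rw [← Polynomial.cyclotomic_eq_minpoly_rat hζ hpf.out.pos] at hdvd
  have hcop : (c).Coprime p := ((Nat.Prime.coprime_iff_not_dvd hpf.out).mpr hc).symm
  have hζ' : IsPrimitiveRoot (zp p ^ c) p := hζ.pow_of_coprime c hcop
  have h2 : Polynomial.aeval (zp p ^ c) (Polynomial.cyclotomic p ℚ) = 0 := by
    have hroot := hζ'.isRoot_cyclotomic hpf.out.pos
    rw [Polynomial.aeval_def, ← Polynomial.eval_map, Polynomial.map_cyclotomic]
    exact hroot
  obtain ⟨Q, hQ⟩ := hdvd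
  have h3 : Polynomial.aeval (zp p ^ c) P = 0 := by rw [hQ, map_mul, h2, zero_mul]
  rw [hev] at h3
  have h4 := sub_eq_zero.mp h3
  calc ∑ x : ι, zp p ^ (c * g x) = ∑ x : ι, (zp p ^ c) ^ g x := by
        refine Finset.sum_congr rfl fun x _ => ?_
        rw [← pow_mul]
      _ = (A : ℂ) * (zp p ^ c) ^ r := h4
      _ = (A : ℂ) * zp p ^ (c * r) := by rw [← pow_mul]

lemma galois' {ι : Type*} [Fintype ι] (c : ZMod p) (hc : c ≠ 0) (g : ι → ZMod p) (A : ℤ)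
    (r : ZMod p) (H : ∑ x : ι, ep p (g x) = (A : ℂ) * ep p r) :
    ∑ x : ι, ep p (c * g x) = (A : ℂ) * ep p (c * r) := by
  have hnd : ¬ p ∣ c.val := by
    intro hd
    have h0 : c.val = 0 := Nat.eq_zero_of_dvd_of_lt hd (ZMod.val_lt c)
    exact hc ((ZMod.val_eq_zero c).mp h0)
  have := galois_aux c.val hnd (fun x => (g x).val) A r.val H
  simpa only [← ep_mul] using this

variable {p : ℕ} [hpf : Fact p.Prime]

lemma root_mem {F : Type} [Field F] [Fintype F] [DecidableEq F] [Algebra (ZMod p) F] {z : F}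
    (hz : z ^ (p - 1) = 1) : ∃ a : (ZMod p)ˣ, algebraMap (ZMod p) F (a : ZMod p) = z := by
  have hp1 : z ^ p = z := by
    have hps : p = (p - 1) + 1 := (Nat.succ_pred_eq_of_pos hpf.out.pos).symm
    rw [hps, pow_succ, hz, one_mul]
  by_contra hne
  push_neg at hne
  set AA : Finset F := Finset.univ.image (fun a : ZMod p => algebraMap (ZMod p) F a) with hAA
  have hinj : Function.Injective (algebraMap (ZMod p) F) := (algebraMap (ZMod p) F).injective
  have hAAcard : AA.card = p := by
    rw [hAA, Finset.card_image_of_injective _ hinj, Finset.card_univ, ZMod.card]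
  have hzA : z ∉ AA := by
    intro hmem
    rw [hAA, Finset.mem_image] at hmem
    obtain ⟨a, -, ha⟩ := hmem
    have ha0 : a ≠ 0 := by
      rintro rfl
      rw [map_zero] at ha
      rw [← ha, zero_pow (Nat.sub_ne_zero_of_lt hpf.out.one_lt)] at hz
      exact zero_ne_one hz
    exact hne (Units.mk0 a ha0) ha
  have hφne : (Polynomial.X ^ p - Polynomial.X : Polynomial F) ≠ 0 :=
    FiniteField.X_pow_card_sub_X_ne_zero F hpf.out.one_lt
  have hdeg : (Polynomial.X ^ p - Polynomial.X : Polynomial F).natDegree = p :=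
    FiniteField.X_pow_card_sub_X_natDegree_eq F hpf.out.one_lt
  have hsub : insert z AA ⊆ (Polynomial.X ^ p - Polynomial.X : Polynomial F).roots.toFinset := by
    intro w hw
    rw [Multiset.mem_toFinset, Polynomial.mem_roots hφne]
    rcases Finset.mem_insert.mp hw with rfl | hwA
    · simp [Polynomial.IsRoot, hp1]
    · rw [hAA, Finset.mem_image] at hwA
      obtain ⟨a, -, rfl⟩ := hwA
      have : (algebraMap (ZMod p) F a) ^ p = algebraMap (ZMod p) F a := by
        rw [← map_pow, ZMod.pow_card]
      simp [Polynomial.IsRoot, this]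
  have hle := Finset.card_le_card hsub
  have h1 : (insert z AA).card = p + 1 := by
    rw [Finset.card_insert_of_notMem hzA, hAAcard]
  have h2 : (Polynomial.X ^ p - Polynomial.X : Polynomial F).roots.toFinset.card ≤ p :=
    le_trans (Multiset.toFinset_card_le _)
      (le_trans (Polynomial.card_roots' _) (le_of_eq hdeg))
  omega

lemma orbit_dvd {F : Type} [Field F] [Fintype F] [DecidableEq F] [Algebra (ZMod p) F]
    (S : Finset F) (h0 : (0 : F) ∉ S)
    (hinv : ∀ (a : (ZMod p)ˣ), ∀ x ∈ S, algebraMap (ZMod p) F (a : ZMod p) * x ∈ S) :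
    (p - 1) ∣ S.card := by
  classical
  have hcard := Finset.card_eq_sum_card_fiberwise
    (f := fun x : F => x ^ (p - 1)) (s := S) (t := S.image (fun x : F => x ^ (p - 1)))
    (fun x hx => Finset.mem_image_of_mem _ hx)
  have hfib : ∀ t ∈ S.image (fun x : F => x ^ (p - 1)),
      (S.filter (fun x => x ^ (p - 1) = t)).card = p - 1 := by
    intro t ht
    obtain ⟨x0, hx0S, hx0⟩ := Finset.mem_image.mp ht
    have hx0ne : x0 ≠ 0 := fun h => h0 (h ▸ hx0S)
    have hASF : S.filter (fun x => x ^ (p - 1) = t)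
        = (Finset.univ : Finset (ZMod p)ˣ).image
            (fun a : (ZMod p)ˣ => algebraMap (ZMod p) F (a : ZMod p) * x0) := by
      apply Finset.ext
      intro y
      constructor
      · intro hy
        obtain ⟨hyS, hyt⟩ := Finset.mem_filter.mp hy
        have hyne : y ≠ 0 := fun h => h0 (h ▸ hyS)
        have hq : (y * x0⁻¹) ^ (p - 1) = 1 := by
          rw [mul_pow, hyt, ← hx0, inv_pow, mul_inv_cancel₀ (pow_ne_zero _ hx0ne)]
        obtain ⟨a, ha⟩ := root_mem hq
        refine Finset.mem_image.mpr ⟨a, Finset.mem_univ a, ?_⟩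
        rw [ha]
        field_simp
      · intro hy
        obtain ⟨a, -, rfl⟩ := Finset.mem_image.mp hy
        refine Finset.mem_filter.mpr ⟨hinv a x0 hx0S, ?_⟩
        have hu : (algebraMap (ZMod p) F (a : ZMod p)) ^ (p - 1) = 1 := by
          rw [← map_pow, ZMod.pow_card_sub_one_eq_one (a.ne_zero), map_one]
        rw [mul_pow, hu, one_mul, hx0]
    rw [hASF, Finset.card_image_of_injective, Finset.card_univ, ZMod.card_units]
    intro a b hab
    have : algebraMap (ZMod p) F (a : ZMod p) = algebraMap (ZMod p) F (b : ZMod p) :=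
      mul_right_cancel₀ hx0ne hab
    exact Units.ext ((algebraMap (ZMod p) F).injective this)
  rw [hcard, Finset.sum_congr rfl hfib, Finset.sum_const, smul_eq_mul]
  exact Dvd.intro_left _ rfl

lemma two_mul_card_sq (hp2 : p ≠ 2) [DecidablePred (IsSquare (α := ZMod p))] :
    2 * ((Finset.univ : Finset (ZMod p)).filter (fun j => j ≠ 0 ∧ IsSquare j)).card = p - 1 := by
  classical
  have hp2' : (2 : ZMod p) ≠ 0 := by
    have : ((2 : ℕ) : ZMod p) ≠ 0 := by
      rw [Ne, ZMod.natCast_eq_zero_iff]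
      exact fun hdvd => hp2 ((Nat.prime_dvd_prime_iff_eq hpf.out Nat.prime_two).mp hdvd)
    simpa using this
  have hcard := Finset.card_eq_sum_card_fiberwise
    (f := fun v : ZMod p => v * v)
    (s := (Finset.univ : Finset (ZMod p)).filter (fun v => v ≠ 0))
    (t := (Finset.univ : Finset (ZMod p)).filter (fun j => j ≠ 0 ∧ IsSquare j))
    (by
      intro v hv
      have hvne := (Finset.mem_filter.mp hv).2
      exact Finset.mem_filter.mpr ⟨Finset.mem_univ _, mul_ne_zero hvne hvne, ⟨v, rfl⟩⟩)
  have hfib : ∀ j ∈ (Finset.univ : Finset (ZMod p)).filter (fun j => j ≠ 0 ∧ IsSquare j),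
      (((Finset.univ : Finset (ZMod p)).filter (fun v => v ≠ 0)).filter
        (fun v => v * v = j)).card = 2 := by
    intro j hj
    obtain ⟨-, hjne, w, hwj⟩ := Finset.mem_filter.mp hj
    have hw : w * w = j := hwj.symm
    have hwne : w ≠ 0 := by rintro rfl; rw [mul_zero] at hw; exact hjne hw.symm
    have hset : ((Finset.univ : Finset (ZMod p)).filter (fun v => v ≠ 0)).filter
        (fun v => v * v = j) = {w, -w} := by
      apply Finset.ext
      intro v
      simp only [Finset.mem_filter, Finset.mem_univ, true_and, Finset.mem_insert,
        Finset.mem_singleton]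
      constructor
      · rintro ⟨hvne, hv⟩
        have : (v - w) * (v + w) = 0 := by linear_combination hv - hw
        rcases mul_eq_zero.mp this with h | h
        · exact Or.inl (sub_eq_zero.mp h)
        · exact Or.inr (eq_neg_of_add_eq_zero_left h)
      · rintro (rfl | rfl)
        · exact ⟨hwne, hw⟩
        · exact ⟨neg_ne_zero.mpr hwne, by rw [neg_mul_neg, hw]⟩
    rw [hset]
    rw [Finset.card_insert_of_notMem, Finset.card_singleton]
    rw [Finset.mem_singleton]
    intro h
    apply hwne
    have : (2 : ZMod p) * w = 0 := by linear_combination h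
    exact (mul_eq_zero.mp this).resolve_left hp2'
  have hnz : ((Finset.univ : Finset (ZMod p)).filter (fun v => v ≠ 0)).card = p - 1 := by
    rw [Finset.filter_ne']
    rw [Finset.card_erase_of_mem (Finset.mem_univ _), Finset.card_univ, ZMod.card]
  rw [Finset.sum_congr rfl hfib, Finset.sum_const, smul_eq_mul] at hcard
  omega



variable {p : ℕ} [hpf : Fact p.Prime]

lemma legendre_neg_one (hp2 : p ≠ 2) :
    legendreSym p (-1) = if p % 4 = 1 then 1 else -1 := by
  have hodd : p % 2 = 1 := Nat.odd_iff.mp (hpf.out.odd_of_ne_two hp2)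
  rw [legendreSym.at_neg_one hp2, ZMod.χ₄_nat_eq_if_mod_four, if_neg (by omega)]

lemma sqrtPstar_pow (hp2 : p ≠ 2) (k : ℕ) :
    sqrtPstar p ^ (k + k) = ((legendreSym p (-1) ^ k * (p : ℤ) ^ k : ℤ) : ℂ) := by
  have hleg := legendre_neg_one (p := p) hp2
  have hsq : sqrtPstar p ^ 2 = ((legendreSym p (-1) * (p : ℤ) : ℤ) : ℂ) := by
    unfold sqrtPstar
    have hs : ((Real.sqrt p : ℝ) : ℂ) ^ 2 = (p : ℂ) := by
      rw [← Complex.ofReal_pow, Real.sq_sqrt (by positivity : (0:ℝ) ≤ (p:ℝ))]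
      norm_num
    split_ifs with h4
    · rw [hs, hleg, if_pos h4]; push_cast; ring
    · rw [mul_pow, hs, Complex.I_sq, hleg, if_neg h4]; push_cast; ring
  calc sqrtPstar p ^ (k + k) = (sqrtPstar p ^ 2) ^ k := by rw [← pow_mul, two_mul]
    _ = _ := by rw [hsq]; push_cast; ring

lemma trace_one {F : Type} [Field F] [Fintype F] [Algebra (ZMod p) F] {γ : F} (hγ : γ ≠ 0) :
    ∃ v : F, Algebra.trace (ZMod p) F (γ * v) = 1 := by
  have hfd : FiniteDimensional (ZMod p) F := inferInstance
  have hsep : Algebra.IsSeparable (ZMod p) F := inferInstance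
  have hnd := traceForm_nondegenerate (ZMod p) F
  obtain ⟨v0, hv0⟩ : ∃ v, Algebra.trace (ZMod p) F (γ * v) ≠ 0 := by
    by_contra hall
    push_neg at hall
    exact hγ (hnd.1 γ (fun y => by simpa [Algebra.traceForm_apply] using hall y))
  set c : ZMod p := (Algebra.trace (ZMod p) F (γ * v0))⁻¹ with hc
  refine ⟨algebraMap (ZMod p) F c * v0, ?_⟩
  have h1 : γ * (algebraMap (ZMod p) F c * v0) = c • (γ * v0) := by
    rw [Algebra.smul_def]; ring
  rw [h1, map_smul, smul_eq_mul, hc, inv_mul_cancel₀ hv0]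


end aux

theorem stmt_19 (p m : ℕ) [Fact p.Prime] (hp2 : p ≠ 2) (hme : Even m) (hm : 2 ≤ m)
    [DecidablePred (IsSquare (α := ZMod p))]
    (F : Type) [Field F] [Fintype F] [DecidableEq F] [Algebra (ZMod p) F]
    (hcard : Fintype.card F = p ^ m)
    (f fstar : F → ZMod p) (ε : ℤ) (hε : ε = 1 ∨ ε = -1)
    (hW : ∀ β : F, ∑ x : F, zp p ^ (f x + Algebra.trace (ZMod p) F (β * x)).val
      = (ε : ℂ) * sqrtPstar p ^ m * zp p ^ (fstar β).val)
    (hf0 : f 0 = 0) (h : ℕ) (hh : Nat.gcd (h - 1) (p - 1) = 1)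
    (hhom : ∀ (a : (ZMod p)ˣ) (x : F),
      f (algebraMap (ZMod p) F (a : ZMod p) * x) = (a : ZMod p) ^ h * f x)
    (β : F) (hβ : β ≠ 0) :
    ((fstar β = 0 ∨ (fstar β ≠ 0 ∧ ¬ IsSquare (fstar β))) →
      (((Finset.univ.filter fun x : F =>
            (f x ≠ 0 ∧ IsSquare (f x)) ∧ Algebra.trace (ZMod p) F (β * x) = 0).card : ℤ)
        = (((p : ℤ) - 1) / 2)
            * ((p : ℤ) ^ (m - 2) - ε * (legendreSym p (-1)) ^ (m / 2) * (p : ℤ) ^ ((m - 2) / 2))))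
    ∧ ((fstar β ≠ 0 ∧ IsSquare (fstar β)) →
      (((Finset.univ.filter fun x : F =>
            (f x ≠ 0 ∧ IsSquare (f x)) ∧ Algebra.trace (ZMod p) F (β * x) = 0).card : ℤ)
        = (((p : ℤ) - 1) / 2)
            * ((p : ℤ) ^ (m - 2) + ε * (legendreSym p (-1)) ^ (m / 2) * (p : ℤ) ^ ((m - 2) / 2)))) := by
  classical
  have hp : p.Prime := Fact.out
  have hp3 : 3 ≤ p := by
    have := hp.two_le
    omega
  have hp0 : p ≠ 0 := hp.ne_zero
  have hpodd : p % 2 = 1 := Nat.odd_iff.mp (hp.odd_of_ne_two hp2)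
  obtain ⟨k, hmk⟩ := hme
  subst hmk
  have hk1 : 1 ≤ k := by omega
  have hh2 : 2 ≤ h := by
    by_contra hlt
    push_neg at hlt
    interval_cases h <;> simp_all
  have hheven : 2 * (h / 2) = h := by
    have hpe : (2 : ℕ) ∣ (p - 1) := by omega
    have : ¬ (2 : ℕ) ∣ (h - 1) := by
      intro hdvd
      have := Nat.dvd_gcd hdvd hpe
      rw [hh] at this
      omega
    omega
  set η : ℤ := legendreSym p (-1) with hηdef
  have hη : η = 1 ∨ η = -1 := by
    rw [hηdef, legendre_neg_one hp2]
    split_ifs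
    · exact Or.inl rfl
    · exact Or.inr rfl
  set A : ℤ := ε * η ^ k * (p : ℤ) ^ k with hAdef
  have hA : (ε : ℂ) * sqrtPstar p ^ (k + k) = ((A : ℤ) : ℂ) := by
    rw [sqrtPstar_pow hp2 k, hAdef]
    push_cast
    ring
  have hAne : A ≠ 0 := by
    have hpk : ((p : ℤ)) ^ k ≠ 0 := pow_ne_zero _ (by exact_mod_cast hp0)
    rcases hε with hε1 | hε1 <;> rcases hη with hη1 | hη1 <;>
      rw [hAdef, hε1, hη1] <;> simp [hpk]
  have hACne : ((A : ℤ) : ℂ) ≠ 0 := Int.cast_ne_zero.mpr hAne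
  have hW' : ∀ γ : F, ∑ x : F, ep p (f x + Algebra.trace (ZMod p) F (γ * x))
      = ((A : ℤ) : ℂ) * ep p (fstar γ) := by
    intro γ
    have := hW γ
    rw [hA] at this
    exact this
  have htr_smul : ∀ (c : ZMod p) (γ x : F),
      Algebra.trace (ZMod p) F ((algebraMap (ZMod p) F c * γ) * x)
        = c * Algebra.trace (ZMod p) F (γ * x) := by
    intro c γ x
    have h1 : (algebraMap (ZMod p) F c * γ) * x = c • (γ * x) := by
      rw [Algebra.smul_def]; ring
    rw [h1, map_smul, smul_eq_mul]
  have htr_smul2 : ∀ (c : ZMod p) (γ x : F),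
      Algebra.trace (ZMod p) F (γ * (algebraMap (ZMod p) F c * x))
        = c * Algebra.trace (ZMod p) F (γ * x) := by
    intro c γ x
    rw [show γ * (algebraMap (ZMod p) F c * x) = (algebraMap (ZMod p) F c * γ) * x by ring]
    exact htr_smul c γ x
  have hT0 : ∀ γ : F, γ ≠ 0 → ∑ x : F, ep p (Algebra.trace (ZMod p) F (γ * x)) = 0 := by
    intro γ hγ
    obtain ⟨v, hv⟩ := trace_one (p := p) hγ
    have hz : zp p ≠ 1 := zp_prim.ne_one hp.one_lt
    have key : (∑ x : F, ep p (Algebra.trace (ZMod p) F (γ * x))) * zp p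
        = ∑ x : F, ep p (Algebra.trace (ZMod p) F (γ * x)) := by
      rw [Finset.sum_mul]
      calc ∑ x : F, ep p (Algebra.trace (ZMod p) F (γ * x)) * zp p
          = ∑ x : F, ep p (Algebra.trace (ZMod p) F (γ * (x + v))) := by
            refine Finset.sum_congr rfl fun x _ => ?_
            rw [mul_add, map_add, ep_add, hv, ep_one]
        _ = ∑ x : F, ep p (Algebra.trace (ZMod p) F (γ * x)) :=
            Fintype.sum_equiv (Equiv.addRight v) _ _ (fun x => rfl)
    have h0 : (∑ x : F, ep p (Algebra.trace (ZMod p) F (γ * x))) * (zp p - 1) = 0 := by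
      rw [mul_sub, key, mul_one, sub_self]
    rcases mul_eq_zero.mp h0 with h1 | h1
    · exact h1
    · exact absurd (sub_eq_zero.mp h1) hz
  have hscaleW : ∀ (w : (ZMod p)ˣ) (γ : F),
      fstar (algebraMap (ZMod p) F ((w ^ (h - 1) : (ZMod p)ˣ) : ZMod p) * γ)
        = ((w ^ h : (ZMod p)ˣ) : ZMod p) * fstar γ := by
    intro w γ
    have hb0 : (algebraMap (ZMod p) F ((w⁻¹ : (ZMod p)ˣ) : ZMod p)) ≠ 0 := by
      rw [Ne, map_eq_zero_iff _ (algebraMap (ZMod p) F).injective]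
      exact Units.ne_zero _
    have H1 : ∑ x : F, ep p (f (algebraMap (ZMod p) F ((w⁻¹ : (ZMod p)ˣ) : ZMod p) * x)
        + Algebra.trace (ZMod p) F (γ * (algebraMap (ZMod p) F ((w⁻¹ : (ZMod p)ˣ) : ZMod p) * x)))
        = ((A : ℤ) : ℂ) * ep p (fstar γ) := by
      rw [← hW' γ]
      exact Fintype.sum_equiv (Equiv.mulLeft₀ _ hb0) _ _ (fun x => rfl)
    have H2 : ∑ x : F, ep p (((w⁻¹ : (ZMod p)ˣ) : ZMod p) ^ h * f x
        + ((w⁻¹ : (ZMod p)ˣ) : ZMod p) * Algebra.trace (ZMod p) F (γ * x))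
        = ((A : ℤ) : ℂ) * ep p (fstar γ) := by
      rw [← H1]
      refine Finset.sum_congr rfl fun x _ => ?_
      rw [hhom w⁻¹ x, htr_smul2]
    have H3 := galois' ((w ^ h : (ZMod p)ˣ) : ZMod p) (Units.ne_zero _) _ A _ H2
    have hcb : ((w ^ h : (ZMod p)ˣ) : ZMod p) * ((w⁻¹ : (ZMod p)ˣ) : ZMod p) ^ h = 1 := by
      rw [← Units.val_pow_eq_pow_val, ← Units.val_mul, ← mul_pow, mul_inv_cancel, one_pow,
        Units.val_one]
    have hcb2 : ((w ^ h : (ZMod p)ˣ) : ZMod p) * ((w⁻¹ : (ZMod p)ˣ) : ZMod p)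
        = ((w ^ (h - 1) : (ZMod p)ˣ) : ZMod p) := by
      rw [← Units.val_mul]
      congr 1
      have h1 : w ^ (h - 1) * w = w ^ h := by
        rw [← pow_succ]
        congr 1
        omega
      calc w ^ h * w⁻¹ = (w ^ (h - 1) * w) * w⁻¹ := by rw [h1]
        _ = w ^ (h - 1) := by rw [mul_assoc, mul_inv_cancel, mul_one]
    have H4 : ∑ x : F, ep p (f x + Algebra.trace (ZMod p) F
        ((algebraMap (ZMod p) F ((w ^ (h - 1) : (ZMod p)ˣ) : ZMod p) * γ) * x))
        = ((A : ℤ) : ℂ) * ep p (((w ^ h : (ZMod p)ˣ) : ZMod p) * fstar γ) := by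
      rw [← H3]
      refine Finset.sum_congr rfl fun x _ => ?_
      congr 1
      rw [htr_smul, mul_add, ← mul_assoc, ← mul_assoc, hcb, hcb2, one_mul]
    have H5 := hW' (algebraMap (ZMod p) F ((w ^ (h - 1) : (ZMod p)ˣ) : ZMod p) * γ)
    exact ep_inj (mul_left_cancel₀ hACne (H5.symm.trans H4))
  have hscale : ∀ u : ZMod p, u ≠ 0 → ∃ s : ZMod p, s ≠ 0 ∧ IsSquare s ∧
      ∀ γ : F, fstar (algebraMap (ZMod p) F u * γ) = s * fstar γ := by
    intro u hu
    have hcop : (Nat.card (ZMod p)ˣ).Coprime (h - 1) := by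
      rw [Nat.card_eq_fintype_card, ZMod.card_units]
      exact Nat.coprime_comm.mp hh
    obtain ⟨w, hw⟩ : ∃ w : (ZMod p)ˣ, w ^ (h - 1) = Units.mk0 u hu := by
      refine ⟨(powCoprime hcop).symm (Units.mk0 u hu), ?_⟩
      rw [← powCoprime_apply hcop]
      exact (powCoprime hcop).apply_symm_apply _
    refine ⟨((w ^ h : (ZMod p)ˣ) : ZMod p), Units.ne_zero _, ?_, ?_⟩
    · refine ⟨((w ^ (h / 2) : (ZMod p)ˣ) : ZMod p), ?_⟩
      rw [← Units.val_mul, ← pow_add]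
      congr 2
      omega
    · intro γ
      have hsw := hscaleW w γ
      rw [hw] at hsw
      simpa using hsw
  have hf0star : fstar 0 = 0 := by
    by_contra ht0
    have hall : ∀ a : (ZMod p)ˣ, ((a : ZMod p)) ^ h = 1 := by
      intro a
      have h1 := hscaleW a 0
      rw [mul_zero] at h1
      have h2 : (((a ^ h : (ZMod p)ˣ) : ZMod p) - 1) * fstar 0 = 0 := by
        rw [sub_mul, one_mul, ← h1, sub_self]
      rcases mul_eq_zero.mp h2 with h3 | h3
      · have h4 := sub_eq_zero.mp h3
        rw [Units.val_pow_eq_pow_val] at h4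
        exact h4
      · exact absurd h3 ht0
    have hInv : ∀ (a : (ZMod p)ˣ) (x : F), f (algebraMap (ZMod p) F (a : ZMod p) * x) = f x := by
      intro a x
      rw [hhom a x, hall a, one_mul]
    have H0 : ∑ x : F, ep p (f x) = ((A : ℤ) : ℂ) * ep p (fstar 0) := by
      have h5 := hW' 0
      simpa using h5
    have Hc : ∀ c : ZMod p, c ≠ 0 → ∑ x : F, ep p (c * f x)
        = ((A : ℤ) : ℂ) * ep p (c * fstar 0) :=
      fun c hc => galois' c hc _ A _ H0
    have Hsum1 : ∑ c : ZMod p, ∑ x : F, ep p (c * f x)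
        = (p : ℂ) * ((Finset.univ.filter (fun x : F => f x = 0)).card : ℂ) := by
      rw [Finset.sum_comm]
      rw [Finset.sum_congr rfl (fun x _ => sum_ep_mul (f x))]
      rw [Finset.sum_ite, Finset.sum_const, Finset.sum_const_zero, add_zero, nsmul_eq_mul]
      ring
    have Hsum2 : ∑ c : ZMod p, ∑ x : F, ep p (c * f x) = (p : ℂ) ^ (k + k) - ((A : ℤ) : ℂ) := by
      rw [← Finset.sum_erase_add _ _ (Finset.mem_univ (0 : ZMod p))]
      have hzero : ∑ x : F, ep p ((0 : ZMod p) * f x) = (p : ℂ) ^ (k + k) := by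
        simp [ep_zero, hcard]
      have herase : ∑ c ∈ Finset.univ.erase (0 : ZMod p), ∑ x : F, ep p (c * f x)
          = -((A : ℤ) : ℂ) := by
        rw [Finset.sum_congr rfl (fun c hc => Hc c (Finset.ne_of_mem_erase hc))]
        rw [← Finset.mul_sum]
        have h6 : ∑ c ∈ Finset.univ.erase (0 : ZMod p), ep p (c * fstar 0) = -1 := by
          have h7 := Finset.sum_erase_add Finset.univ (fun c : ZMod p => ep p (c * fstar 0))
            (Finset.mem_univ (0 : ZMod p))
          rw [sum_ep_mul, if_neg ht0, zero_mul, ep_zero] at h7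
          exact eq_neg_of_add_eq_zero_left h7
        rw [h6]
        ring
      rw [herase, hzero]
      ring
    have hn0C : (p : ℂ) * ((Finset.univ.filter (fun x : F => f x = 0)).card : ℂ)
        = (p : ℂ) ^ (k + k) - ((A : ℤ) : ℂ) := by rw [← Hsum1, Hsum2]
    have hn0 : (p : ℤ) * ((Finset.univ.filter (fun x : F => f x = 0)).card : ℤ)
        = (p : ℤ) ^ (k + k) - A := by exact_mod_cast hn0C
    have hdvd : (p - 1) ∣ (Finset.univ.filter (fun x : F => x ≠ 0 ∧ f x = 0)).card := by
      apply orbit_dvd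
      · simp
      · intro a x hx
        rw [Finset.mem_filter] at hx ⊢
        refine ⟨Finset.mem_univ _, ?_, ?_⟩
        · exact mul_ne_zero
            (by rw [Ne, map_eq_zero_iff _ (algebraMap (ZMod p) F).injective]
                exact Units.ne_zero a) hx.2.1
        · rw [hInv a x]
          exact hx.2.2
    have hcards : (Finset.univ.filter (fun x : F => f x = 0)).card
        = (Finset.univ.filter (fun x : F => x ≠ 0 ∧ f x = 0)).card + 1 := by
      have hins : Finset.univ.filter (fun x : F => f x = 0)
          = insert (0 : F) (Finset.univ.filter (fun x : F => x ≠ 0 ∧ f x = 0)) := by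
        ext x
        simp only [Finset.mem_filter, Finset.mem_univ, true_and, Finset.mem_insert]
        constructor
        · intro hfx
          rcases eq_or_ne x 0 with rfl | hx0
          · exact Or.inl rfl
          · exact Or.inr ⟨hx0, hfx⟩
        · rintro (rfl | ⟨-, hfx⟩)
          · exact hf0
          · exact hfx
      rw [hins, Finset.card_insert_of_notMem (by simp)]
    obtain ⟨K, hK⟩ := hdvd
    have hpm1 : ((p - 1 : ℕ) : ℤ) = (p : ℤ) - 1 := by
      push_cast [Nat.cast_sub (by omega : 1 ≤ p)]
      ring
    have hKz : ((Finset.univ.filter (fun x : F => f x = 0)).card : ℤ)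
        = ((p : ℤ) - 1) * (K : ℤ) + 1 := by
      rw [hcards, hK]
      push_cast [← hpm1]
      ring
    have hps : ((p : ℤ) - 1) ∣ A := by
      have hd1 : ((p : ℤ) - 1) ∣ (p : ℤ) ^ (k + k) - 1 := by
        simpa using sub_dvd_pow_sub_pow (p : ℤ) 1 (k + k)
      have hA2 : A = ((p : ℤ) ^ (k + k) - 1) - ((p : ℤ) - 1) - (p : ℤ) * ((p : ℤ) - 1) * K := by
        rw [hKz] at hn0
        linarith [hn0]
      rw [hA2]
      exact dvd_sub (dvd_sub hd1 dvd_rfl) ⟨(p : ℤ) * K, by ring⟩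
    have hdk : ((p : ℤ) - 1) ∣ (p : ℤ) ^ k - 1 := by
      simpa using sub_dvd_pow_sub_pow (p : ℤ) 1 k
    have hε2 : ε ^ 2 = 1 := by rcases hε with h1 | h1 <;> rw [h1] <;> norm_num
    have hη2 : η ^ 2 = 1 := by rcases hη with h1 | h1 <;> rw [h1] <;> norm_num
    have hsq' : (ε * η ^ k) * A = (p : ℤ) ^ k := by
      calc (ε * η ^ k) * A = ε ^ 2 * (η ^ 2) ^ k * (p : ℤ) ^ k := by rw [hAdef]; ring
        _ = (p : ℤ) ^ k := by rw [hε2, hη2, one_pow, one_mul, one_mul]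
    have hdvdpk : ((p : ℤ) - 1) ∣ (p : ℤ) ^ k := hsq' ▸ Dvd.dvd.mul_left hps (ε * η ^ k)
    have hone : ((p : ℤ) - 1) ∣ 1 := by
      have h8 := dvd_sub hdvdpk hdk
      simpa using h8
    have hle := Int.le_of_dvd one_pos hone
    have hp3' : (3 : ℤ) ≤ (p : ℤ) := by exact_mod_cast hp3
    omega
  -- the master computation
  set SS : Finset (ZMod p) := Finset.univ.filter (fun j => j ≠ 0 ∧ IsSquare j) with hSSdef
  set N := (Finset.univ.filter fun x : F =>
      (f x ≠ 0 ∧ IsSquare (f x)) ∧ Algebra.trace (ZMod p) F (β * x) = 0).card with hNdef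
  set U0 : Finset (ZMod p) := Finset.univ.erase 0 with hU0def
  set SqC := (U0.filter (fun u => fstar (algebraMap (ZMod p) F u * β) ≠ 0
      ∧ IsSquare (fstar (algebraMap (ZMod p) F u * β)))).card with hSqCdef
  have hU0card : U0.card = p - 1 := by
    rw [hU0def, Finset.card_erase_of_mem (Finset.mem_univ _), Finset.card_univ, ZMod.card]
  have master : (p : ℂ) ^ 2 * (N : ℂ)
      = (SS.card : ℂ) * ((p : ℂ) ^ (k + k) - ((A : ℤ) : ℂ) * (p : ℂ))
        + ((A : ℤ) : ℂ) * (p : ℂ) * (SqC : ℂ) := by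
    have K1 : ∀ y z : ZMod p, y ≠ 0 →
        ∑ x : F, ep p (y * f x + z * Algebra.trace (ZMod p) F (β * x))
          = ((A : ℤ) : ℂ) * ep p (y * fstar (algebraMap (ZMod p) F (y⁻¹ * z) * β)) := by
      intro y z hy
      have H := hW' (algebraMap (ZMod p) F (y⁻¹ * z) * β)
      have H2 := galois' y hy _ A _ H
      rw [← H2]
      refine Finset.sum_congr rfl fun x _ => ?_
      congr 1
      rw [htr_smul, mul_add, ← mul_assoc, ← mul_assoc, mul_inv_cancel₀ hy, one_mul]
    have K3 : ∑ z : ZMod p, ∑ x : F,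
        ep p ((0 : ZMod p) * f x + z * Algebra.trace (ZMod p) F (β * x))
        = (p : ℂ) ^ (k + k) := by
      rw [Finset.sum_eq_single (0 : ZMod p)]
      · simp [ep_zero, hcard]
      · intro z _ hz
        have hγ : algebraMap (ZMod p) F z * β ≠ 0 := mul_ne_zero
          (by rw [Ne, map_eq_zero_iff _ (algebraMap (ZMod p) F).injective]; exact hz) hβ
        rw [← hT0 _ hγ]
        refine Finset.sum_congr rfl fun x _ => ?_
        rw [zero_mul, zero_add, ← htr_smul]
      · intro habs
        exact absurd (Finset.mem_univ _) habs
    have K2 : ∀ y : ZMod p, y ≠ 0 →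
        ∑ z : ZMod p, ∑ x : F, ep p (y * f x + z * Algebra.trace (ZMod p) F (β * x))
          = ((A : ℤ) : ℂ)
            * (1 + ∑ u ∈ U0, ep p (y * fstar (algebraMap (ZMod p) F u * β))) := by
      intro y hy
      rw [Finset.sum_congr rfl (fun z _ => K1 y z hy)]
      rw [← Finset.sum_erase_add _ _ (Finset.mem_univ (0 : ZMod p))]
      have ht0term : ((A : ℤ) : ℂ)
          * ep p (y * fstar (algebraMap (ZMod p) F (y⁻¹ * 0) * β)) = ((A : ℤ) : ℂ) := by
        rw [mul_zero, map_zero, zero_mul, hf0star, mul_zero, ep_zero, mul_one]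
      have hre : ∑ z ∈ Finset.univ.erase (0 : ZMod p),
          ((A : ℤ) : ℂ) * ep p (y * fstar (algebraMap (ZMod p) F (y⁻¹ * z) * β))
          = ∑ u ∈ U0, ((A : ℤ) : ℂ) * ep p (y * fstar (algebraMap (ZMod p) F u * β)) := by
        refine Finset.sum_nbij' (fun z => y⁻¹ * z) (fun u => y * u) ?_ ?_ ?_ ?_ ?_
        · intro z hz
          rw [hU0def, Finset.mem_erase]
          exact ⟨mul_ne_zero (inv_ne_zero hy) (Finset.ne_of_mem_erase hz), Finset.mem_univ _⟩
        · intro u hu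
          rw [hU0def] at hu
          exact Finset.mem_erase.mpr ⟨mul_ne_zero hy (Finset.ne_of_mem_erase hu),
            Finset.mem_univ _⟩
        · intro z _
          rw [← mul_assoc, mul_inv_cancel₀ hy, one_mul]
        · intro u _
          rw [← mul_assoc, inv_mul_cancel₀ hy, one_mul]
        · intro z _
          rfl
      rw [ht0term, hre, mul_add, mul_one, Finset.mul_sum]
      exact add_comm _ _
    set SqD : ZMod p → ℕ := fun j =>
      (U0.filter (fun u => fstar (algebraMap (ZMod p) F u * β) = j)).card with hSqDdef
    have stepV : ∀ j ∈ SS,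
        ∑ y : ZMod p, ∑ z : ZMod p, ∑ x : F,
          ep p (y * (f x - j)) * ep p (z * Algebra.trace (ZMod p) F (β * x))
        = (p : ℂ) ^ (k + k) - ((A : ℤ) : ℂ) * (p : ℂ)
          + ((A : ℤ) : ℂ) * (p : ℂ) * (SqD j : ℂ) := by
      intro j hjSS
      have hj : j ≠ 0 := by
        rw [hSSdef, Finset.mem_filter] at hjSS
        exact hjSS.2.1
      have hsplit : ∀ y z : ZMod p, ∀ x : F,
          ep p (y * (f x - j)) * ep p (z * Algebra.trace (ZMod p) F (β * x))
          = ep p (y * -j) * ep p (y * f x + z * Algebra.trace (ZMod p) F (β * x)) := by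
        intro y z x
        rw [← ep_add, ← ep_add]
        congr 1
        ring
      have hV1 : ∑ y : ZMod p, ∑ z : ZMod p, ∑ x : F,
          ep p (y * (f x - j)) * ep p (z * Algebra.trace (ZMod p) F (β * x))
          = ∑ y : ZMod p, ep p (y * -j) * (∑ z : ZMod p, ∑ x : F,
              ep p (y * f x + z * Algebra.trace (ZMod p) F (β * x))) := by
        refine Finset.sum_congr rfl fun y _ => ?_
        rw [Finset.mul_sum]
        refine Finset.sum_congr rfl fun z _ => ?_
        rw [Finset.mul_sum]
        exact Finset.sum_congr rfl fun x _ => hsplit y z x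
      rw [hV1]
      rw [← Finset.sum_erase_add _ _ (Finset.mem_univ (0 : ZMod p))]
      have hg0 : ep p ((0 : ZMod p) * -j) * (∑ z : ZMod p, ∑ x : F,
          ep p ((0 : ZMod p) * f x + z * Algebra.trace (ZMod p) F (β * x)))
          = (p : ℂ) ^ (k + k) := by
        rw [zero_mul, ep_zero, one_mul, K3]
      have hgy : ∀ y ∈ Finset.univ.erase (0 : ZMod p),
          ep p (y * -j) * (∑ z : ZMod p, ∑ x : F,
            ep p (y * f x + z * Algebra.trace (ZMod p) F (β * x)))
          = ((A : ℤ) : ℂ) * ep p (y * -j)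
            + ∑ u ∈ U0, ((A : ℤ) : ℂ) * ep p (y * (fstar (algebraMap (ZMod p) F u * β) - j)) := by
        intro y hy
        rw [K2 y (Finset.ne_of_mem_erase hy)]
        have hcomb : ∀ u ∈ U0, ((A : ℤ) : ℂ)
            * ep p (y * (fstar (algebraMap (ZMod p) F u * β) - j))
            = ((A : ℤ) : ℂ)
              * (ep p (y * -j) * ep p (y * fstar (algebraMap (ZMod p) F u * β))) := by
          intro u _
          rw [← ep_add]
          congr 2
          ring
        rw [Finset.sum_congr rfl hcomb, ← Finset.mul_sum, ← Finset.mul_sum]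
        ring
      rw [Finset.sum_congr rfl hgy, hg0]
      rw [Finset.sum_add_distrib]
      have hterm1 : ∑ y ∈ Finset.univ.erase (0 : ZMod p), ((A : ℤ) : ℂ) * ep p (y * -j)
          = -((A : ℤ) : ℂ) := by
        rw [← Finset.mul_sum]
        have h6 : ∑ y ∈ Finset.univ.erase (0 : ZMod p), ep p (y * -j) = -1 := by
          have h7 := Finset.sum_erase_add Finset.univ (fun y : ZMod p => ep p (y * -j))
            (Finset.mem_univ (0 : ZMod p))
          rw [sum_ep_mul, if_neg (neg_ne_zero.mpr hj), zero_mul, ep_zero] at h7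
          exact eq_neg_of_add_eq_zero_left h7
        rw [h6]
        ring
      have hterm2 : ∑ y ∈ Finset.univ.erase (0 : ZMod p), ∑ u ∈ U0,
          ((A : ℤ) : ℂ) * ep p (y * (fstar (algebraMap (ZMod p) F u * β) - j))
          = ((A : ℤ) : ℂ) * (p : ℂ) * (SqD j : ℂ) - ((A : ℤ) : ℂ) * ((p : ℂ) - 1) := by
        rw [Finset.sum_comm]
        have hinner : ∀ u ∈ U0, ∑ y ∈ Finset.univ.erase (0 : ZMod p),
            ((A : ℤ) : ℂ) * ep p (y * (fstar (algebraMap (ZMod p) F u * β) - j))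
            = ((A : ℤ) : ℂ)
              * ((if fstar (algebraMap (ZMod p) F u * β) - j = 0 then (p : ℂ) else 0) - 1) := by
          intro u _
          rw [← Finset.mul_sum]
          congr 1
          have h7 := Finset.sum_erase_add Finset.univ
            (fun y : ZMod p => ep p (y * (fstar (algebraMap (ZMod p) F u * β) - j)))
            (Finset.mem_univ (0 : ZMod p))
          rw [sum_ep_mul, zero_mul, ep_zero] at h7
          exact eq_sub_of_add_eq h7
        rw [Finset.sum_congr rfl hinner]
        rw [Finset.sum_congr rfl (fun u _ => mul_sub ((A : ℤ) : ℂ) _ 1)]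
        rw [Finset.sum_sub_distrib, Finset.sum_const, nsmul_eq_mul, hU0card]
        have hsum_ite : ∑ u ∈ U0,
            (if fstar (algebraMap (ZMod p) F u * β) - j = 0 then (p : ℂ) else 0)
            = (p : ℂ) * (SqD j : ℂ) := by
          have hcv : ∀ u ∈ U0,
              (if fstar (algebraMap (ZMod p) F u * β) - j = 0 then (p : ℂ) else 0)
              = (if fstar (algebraMap (ZMod p) F u * β) = j then (p : ℂ) else 0) := by
            intro u _
            exact if_congr sub_eq_zero rfl rfl
          rw [Finset.sum_congr rfl hcv]
          rw [Finset.sum_ite, Finset.sum_const, Finset.sum_const_zero, add_zero, nsmul_eq_mul,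
            hSqDdef]
          ring
        rw [← Finset.mul_sum, hsum_ite]
        push_cast [Nat.cast_sub (by omega : 1 ≤ p)]
        ring
      rw [hterm1, hterm2]
      ring
    have hQ2 : ∑ j ∈ SS, ∑ y : ZMod p, ∑ z : ZMod p, ∑ x : F,
        ep p (y * (f x - j)) * ep p (z * Algebra.trace (ZMod p) F (β * x))
        = (SS.card : ℂ) * ((p : ℂ) ^ (k + k) - ((A : ℤ) : ℂ) * (p : ℂ))
          + ((A : ℤ) : ℂ) * (p : ℂ) * (SqC : ℂ) := by
      rw [Finset.sum_congr rfl stepV]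
      rw [Finset.sum_add_distrib, Finset.sum_const, nsmul_eq_mul]
      congr 1
      rw [← Finset.mul_sum]
      congr 1
      have hnat : ∑ j ∈ SS, SqD j = SqC := by
        rw [hSqCdef]
        have h1 : ∀ j ∈ SS, SqD j
            = ∑ u ∈ U0, if fstar (algebraMap (ZMod p) F u * β) = j then 1 else 0 := by
          intro j _
          simp only [hSqDdef]
          rw [Finset.card_filter]
        rw [Finset.sum_congr rfl h1, Finset.sum_comm]
        have h2 : ∀ u ∈ U0,
            (∑ j ∈ SS, if fstar (algebraMap (ZMod p) F u * β) = j then 1 else 0)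
            = if (fstar (algebraMap (ZMod p) F u * β) ≠ 0
                ∧ IsSquare (fstar (algebraMap (ZMod p) F u * β))) then 1 else 0 := by
          intro u _
          have h3 : ∀ j ∈ SS, (if fstar (algebraMap (ZMod p) F u * β) = j then (1 : ℕ) else 0)
              = (if j = fstar (algebraMap (ZMod p) F u * β) then 1 else 0) := by
            intro j _
            exact if_congr eq_comm rfl rfl
          rw [Finset.sum_congr rfl h3, Finset.sum_ite_eq' SS _ (fun _ => (1 : ℕ))]
          refine if_congr ?_ rfl rfl
          rw [hSSdef, Finset.mem_filter]
          simp
        rw [Finset.sum_congr rfl h2, ← Finset.card_filter]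
      rw [← hnat]
      push_cast
      rfl
    have hQ1 : ∑ j ∈ SS, ∑ y : ZMod p, ∑ z : ZMod p, ∑ x : F,
        ep p (y * (f x - j)) * ep p (z * Algebra.trace (ZMod p) F (β * x))
        = (p : ℂ) ^ 2 * (N : ℂ) := by
      have step1 : ∀ j : ZMod p, ∑ y : ZMod p, ∑ z : ZMod p, ∑ x : F,
          ep p (y * (f x - j)) * ep p (z * Algebra.trace (ZMod p) F (β * x))
          = ∑ x : F, (∑ y : ZMod p, ep p (y * (f x - j)))
              * (∑ z : ZMod p, ep p (z * Algebra.trace (ZMod p) F (β * x))) := by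
        intro j
        calc ∑ y : ZMod p, ∑ z : ZMod p, ∑ x : F,
              ep p (y * (f x - j)) * ep p (z * Algebra.trace (ZMod p) F (β * x))
            = ∑ y : ZMod p, ∑ x : F, ∑ z : ZMod p,
              ep p (y * (f x - j)) * ep p (z * Algebra.trace (ZMod p) F (β * x)) :=
              Finset.sum_congr rfl (fun y _ => Finset.sum_comm)
          _ = ∑ x : F, ∑ y : ZMod p, ∑ z : ZMod p,
              ep p (y * (f x - j)) * ep p (z * Algebra.trace (ZMod p) F (β * x)) :=
              Finset.sum_comm
          _ = _ := by
              refine Finset.sum_congr rfl fun x _ => ?_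
              rw [Finset.sum_mul_sum]
      rw [Finset.sum_congr rfl (fun j _ => step1 j), Finset.sum_comm]
      have step2 : ∀ x : F, ∑ j ∈ SS, (∑ y : ZMod p, ep p (y * (f x - j)))
          * (∑ z : ZMod p, ep p (z * Algebra.trace (ZMod p) F (β * x)))
          = if (f x ≠ 0 ∧ IsSquare (f x)) ∧ Algebra.trace (ZMod p) F (β * x) = 0
              then (p : ℂ) ^ 2 else 0 := by
        intro x
        have hite : ∀ j ∈ SS, (∑ y : ZMod p, ep p (y * (f x - j)))
            * (∑ z : ZMod p, ep p (z * Algebra.trace (ZMod p) F (β * x)))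
            = (if j = f x then (p : ℂ) else 0)
              * (if Algebra.trace (ZMod p) F (β * x) = 0 then (p : ℂ) else 0) := by
          intro j _
          rw [sum_ep_mul, sum_ep_mul]
          congr 1
          refine if_congr ?_ rfl rfl
          rw [sub_eq_zero]
          exact eq_comm
        rw [Finset.sum_congr rfl hite, ← Finset.sum_mul,
          Finset.sum_ite_eq' SS (f x) (fun _ => (p : ℂ))]
        have hmem : f x ∈ SS ↔ (f x ≠ 0 ∧ IsSquare (f x)) := by
          rw [hSSdef, Finset.mem_filter]
          simp
        by_cases h1 : f x ≠ 0 ∧ IsSquare (f x) <;>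
          by_cases h2 : Algebra.trace (ZMod p) F (β * x) = 0 <;>
          simp [hmem, h1, h2] <;> ring
      rw [Finset.sum_congr rfl (fun x _ => step2 x)]
      rw [Finset.sum_ite, Finset.sum_const, Finset.sum_const_zero, add_zero, nsmul_eq_mul]
      rw [hNdef]
      ring
    rw [← hQ1, hQ2]
  have hSq2 : ((p : ℂ) - 1) = 2 * (SS.card : ℂ) := by
    have h2 := two_mul_card_sq (p := p) hp2
    rw [← hSSdef] at h2
    have h3 : ((2 * SS.card : ℕ) : ℂ) = ((p - 1 : ℕ) : ℂ) := by exact_mod_cast h2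
    rw [Nat.cast_mul, Nat.cast_sub (by omega : 1 ≤ p)] at h3
    push_cast at h3
    rw [← h3]
  have hcase1 : (fstar β = 0 ∨ (fstar β ≠ 0 ∧ ¬ IsSquare (fstar β))) → SqC = 0 := by
    intro hc
    rw [hSqCdef, Finset.card_eq_zero, Finset.filter_eq_empty_iff]
    intro u hu
    obtain ⟨s, hs0, hssq, hsval⟩ := hscale u
      (by rw [hU0def] at hu; exact Finset.ne_of_mem_erase hu)
    rw [hsval β]
    rcases hc with hc | ⟨hc0, hcns⟩
    · rw [hc, mul_zero]
      simp
    · rintro ⟨hne, hsq⟩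
      apply hcns
      obtain ⟨w, hw⟩ := hssq
      obtain ⟨v, hv⟩ := hsq
      have hw0 : w ≠ 0 := by
        rintro rfl
        rw [mul_zero] at hw
        exact hs0 hw
      refine ⟨w⁻¹ * v, ?_⟩
      have hkey : (w * w) * fstar β = v * v := by rw [← hw, ← hv]
      field_simp
      linear_combination hkey
  have hcase2 : (fstar β ≠ 0 ∧ IsSquare (fstar β)) → SqC = p - 1 := by
    rintro ⟨hb0, hbsq⟩
    rw [hSqCdef]
    have hft : U0.filter (fun u => fstar (algebraMap (ZMod p) F u * β) ≠ 0
        ∧ IsSquare (fstar (algebraMap (ZMod p) F u * β))) = U0 := by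
      apply Finset.filter_true_of_mem
      intro u hu
      obtain ⟨s, hs0, hssq, hsval⟩ := hscale u
        (by rw [hU0def] at hu; exact Finset.ne_of_mem_erase hu)
      rw [hsval β]
      exact ⟨mul_ne_zero hs0 hb0, hssq.mul hbsq⟩
    rw [hft, hU0card]
  -- final arithmetic
  have hpC : (p : ℂ) ≠ 0 := Nat.cast_ne_zero.mpr hp0
  have hp2C : (2 : ℂ) * (p : ℂ) ^ 2 ≠ 0 := by
    exact mul_ne_zero two_ne_zero (pow_ne_zero _ hpC)
  have hP2 : 2 * (((p : ℤ) - 1) / 2) = (p : ℤ) - 1 := by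
    obtain ⟨j, hj⟩ : ∃ j, p = 2 * j + 1 := ⟨p / 2, by omega⟩
    have hjz : (p : ℤ) = 2 * (j : ℤ) + 1 := by exact_mod_cast hj
    rw [hjz]
    rw [show (2 * (j:ℤ) + 1 - 1) = 2 * (j:ℤ) by ring]
    rw [Int.mul_ediv_cancel_left _ (by norm_num)]
  have hE1 : (p : ℂ) ^ (k + k - 2) * (p : ℂ) ^ 2 = (p : ℂ) ^ (k + k) := by
    rw [← pow_add]
    congr 1
    omega
  have hE2 : (p : ℂ) ^ ((k + k - 2) / 2) * (p : ℂ) ^ 2 = (p : ℂ) ^ (k + 1) := by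
    rw [← pow_add]
    congr 1
    omega
  have hAp : ((A : ℤ) : ℂ) * (p : ℂ) = (ε : ℂ) * (η : ℂ) ^ ((k + k) / 2) * (p : ℂ) ^ (k + 1) := by
    rw [hAdef, show (k + k) / 2 = k from by omega]
    push_cast
    ring
  constructor
  · intro hc
    have hS0 : SqC = 0 := hcase1 hc
    have hK : (p : ℂ) ^ 2 * (N : ℂ)
        = (SS.card : ℂ) * ((p : ℂ) ^ (k + k) - ((A : ℤ) : ℂ) * (p : ℂ)) := by
      rw [master, hS0]
      push_cast
      ring
    set R1 : ℤ := ((p : ℤ) - 1) / 2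
        * ((p : ℤ) ^ (k + k - 2) - ε * η ^ ((k + k) / 2) * (p : ℤ) ^ ((k + k - 2) / 2)) with hR1def
    have h2R : ((2 * R1 : ℤ) : ℂ) = ((p : ℂ) - 1)
        * ((p : ℂ) ^ (k + k - 2) - (ε : ℂ) * (η : ℂ) ^ ((k + k) / 2)
            * (p : ℂ) ^ ((k + k - 2) / 2)) := by
      rw [hR1def, ← mul_assoc, hP2]
      push_cast
      ring
    have hC : ((N : ℤ) : ℂ) * (2 * (p : ℂ) ^ 2) = ((R1 : ℤ) : ℂ) * (2 * (p : ℂ) ^ 2) := by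
      have hLHS : ((N : ℤ) : ℂ) * (2 * (p : ℂ) ^ 2)
          = ((p : ℂ) - 1) * ((p : ℂ) ^ (k + k) - ((A : ℤ) : ℂ) * (p : ℂ)) := by
        push_cast
        calc (N : ℂ) * (2 * (p : ℂ) ^ 2) = 2 * ((p : ℂ) ^ 2 * (N : ℂ)) := by ring
          _ = 2 * (SS.card : ℂ) * ((p : ℂ) ^ (k + k) - ((A : ℤ) : ℂ) * (p : ℂ)) := by
              rw [hK]; ring
          _ = ((p : ℂ) - 1) * ((p : ℂ) ^ (k + k) - ((A : ℤ) : ℂ) * (p : ℂ)) := by rw [hSq2]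
      have hRHS : ((R1 : ℤ) : ℂ) * (2 * (p : ℂ) ^ 2)
          = ((p : ℂ) - 1) * ((p : ℂ) ^ (k + k) - ((A : ℤ) : ℂ) * (p : ℂ)) := by
        calc ((R1 : ℤ) : ℂ) * (2 * (p : ℂ) ^ 2) = ((2 * R1 : ℤ) : ℂ) * (p : ℂ) ^ 2 := by
              push_cast; ring
          _ = ((p : ℂ) - 1) * ((p : ℂ) ^ (k + k - 2) * (p : ℂ) ^ 2
                - (ε : ℂ) * (η : ℂ) ^ ((k + k) / 2)
                  * ((p : ℂ) ^ ((k + k - 2) / 2) * (p : ℂ) ^ 2)) := by rw [h2R]; ring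
          _ = ((p : ℂ) - 1) * ((p : ℂ) ^ (k + k)
                - (ε : ℂ) * (η : ℂ) ^ ((k + k) / 2) * (p : ℂ) ^ (k + 1)) := by rw [hE1, hE2]
          _ = ((p : ℂ) - 1) * ((p : ℂ) ^ (k + k) - ((A : ℤ) : ℂ) * (p : ℂ)) := by rw [← hAp]
      rw [hLHS, hRHS]
    have hNR := mul_right_cancel₀ hp2C hC
    exact_mod_cast hNR
  · intro hc
    have hS0 : SqC = p - 1 := hcase2 hc
    have hSqCC : (SqC : ℂ) = (p : ℂ) - 1 := by
      rw [hS0]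
      push_cast [Nat.cast_sub (by omega : 1 ≤ p)]
      ring
    have hK : (p : ℂ) ^ 2 * (N : ℂ)
        = (SS.card : ℂ) * ((p : ℂ) ^ (k + k) - ((A : ℤ) : ℂ) * (p : ℂ))
          + ((A : ℤ) : ℂ) * (p : ℂ) * ((p : ℂ) - 1) := by
      rw [master, hSqCC]
    set R1 : ℤ := ((p : ℤ) - 1) / 2
        * ((p : ℤ) ^ (k + k - 2) + ε * η ^ ((k + k) / 2) * (p : ℤ) ^ ((k + k - 2) / 2)) with hR1def
    have h2R : ((2 * R1 : ℤ) : ℂ) = ((p : ℂ) - 1)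
        * ((p : ℂ) ^ (k + k - 2) + (ε : ℂ) * (η : ℂ) ^ ((k + k) / 2)
            * (p : ℂ) ^ ((k + k - 2) / 2)) := by
      rw [hR1def, ← mul_assoc, hP2]
      push_cast
      ring
    have hC : ((N : ℤ) : ℂ) * (2 * (p : ℂ) ^ 2) = ((R1 : ℤ) : ℂ) * (2 * (p : ℂ) ^ 2) := by
      have hLHS : ((N : ℤ) : ℂ) * (2 * (p : ℂ) ^ 2)
          = ((p : ℂ) - 1) * ((p : ℂ) ^ (k + k) + ((A : ℤ) : ℂ) * (p : ℂ)) := by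
        push_cast
        calc (N : ℂ) * (2 * (p : ℂ) ^ 2) = 2 * ((p : ℂ) ^ 2 * (N : ℂ)) := by ring
          _ = 2 * (SS.card : ℂ) * ((p : ℂ) ^ (k + k) - ((A : ℤ) : ℂ) * (p : ℂ))
              + 2 * (((A : ℤ) : ℂ) * (p : ℂ) * ((p : ℂ) - 1)) := by rw [hK]; ring
          _ = ((p : ℂ) - 1) * ((p : ℂ) ^ (k + k) - ((A : ℤ) : ℂ) * (p : ℂ))
              + 2 * (((A : ℤ) : ℂ) * (p : ℂ) * ((p : ℂ) - 1)) := by rw [hSq2]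
          _ = ((p : ℂ) - 1) * ((p : ℂ) ^ (k + k) + ((A : ℤ) : ℂ) * (p : ℂ)) := by ring
      have hRHS : ((R1 : ℤ) : ℂ) * (2 * (p : ℂ) ^ 2)
          = ((p : ℂ) - 1) * ((p : ℂ) ^ (k + k) + ((A : ℤ) : ℂ) * (p : ℂ)) := by
        calc ((R1 : ℤ) : ℂ) * (2 * (p : ℂ) ^ 2) = ((2 * R1 : ℤ) : ℂ) * (p : ℂ) ^ 2 := by
              push_cast; ring
          _ = ((p : ℂ) - 1) * ((p : ℂ) ^ (k + k - 2) * (p : ℂ) ^ 2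
                + (ε : ℂ) * (η : ℂ) ^ ((k + k) / 2)
                  * ((p : ℂ) ^ ((k + k - 2) / 2) * (p : ℂ) ^ 2)) := by rw [h2R]; ring
          _ = ((p : ℂ) - 1) * ((p : ℂ) ^ (k + k)
                + (ε : ℂ) * (η : ℂ) ^ ((k + k) / 2) * (p : ℂ) ^ (k + 1)) := by rw [hE1, hE2]
          _ = ((p : ℂ) - 1) * ((p : ℂ) ^ (k + k) + ((A : ℤ) : ℂ) * (p : ℂ)) := by rw [← hAp]
      rw [hLHS, hRHS]
    have hNR := mul_right_cancel₀ hp2C hC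
    exact_mod_cast hNR
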